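/- Let G be a group acting by automorphisms on a group Γ and let φ ∈ Char(Γ, G). Then the G-center Z(Γ)^G = {z ∈ Z(Γ) : g • z = z for all g ∈ G} (where Z(Γ) is the center of Γ) is contained in P_φ = {γ ∈ Γ : |φ(γ)| = 1}; that is, |φ(z)| = 1 for every central element z of Γ fixed by all of G. -/

import Mathlib

open scoped ComplexOrder

/-- A function `φ : Γ → ℂ` on a group `Γ` is of positive type if for all `n`,
all `γ : Fin n → Γ` and all coefficients `c : Fin n → ℂ`, the sum
`∑ i j, c i * conj (c j) * φ ((γ j)⁻¹ * γ i)` is a nonnegative real number. -/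
def IsPosType {Γ : Type*} [Group Γ] (φ : Γ → ℂ) : Prop :=
  ∀ (n : ℕ) (γ : Fin n → Γ) (c : Fin n → ℂ),
    0 ≤ ∑ i, ∑ j, c i * (starRingEnd ℂ) (c j) * φ ((γ j)⁻¹ * γ i)

/-- A `G`-invariant trace on `Γ`. -/
def IsInvTrace (G : Type*) {Γ : Type*} [Group G] [Group Γ] [MulDistribMulAction G Γ]
    (φ : Γ → ℂ) : Prop :=
  IsPosType φ ∧ (∀ (g : G) (γ : Γ), φ (g • γ) = φ γ) ∧ φ 1 = 1

/-- A `G`-invariant character on `Γ`: an extreme point of the set of `G`-invariant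
traces. -/
def IsInvChar (G : Type*) {Γ : Type*} [Group G] [Group Γ] [MulDistribMulAction G Γ]
    (φ : Γ → ℂ) : Prop :=
  IsInvTrace G φ ∧ ∀ (ψ₁ ψ₂ : Γ → ℂ) (t : ℝ), IsInvTrace G ψ₁ → IsInvTrace G ψ₂ →
    0 < t → t < 1 → φ = (fun γ => (t : ℂ) * ψ₁ γ + ((1 - t : ℝ) : ℂ) * ψ₂ γ) →
    ψ₁ = φ ∧ ψ₂ = φ

namespace Stmt6Aux

lemma cnonneg (w : ℂ) : 0 ≤ w ↔ 0 ≤ w.re ∧ w.im = 0 := by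
  rw [Complex.le_def]; constructor <;> simp_all [eq_comm]

lemma two_point {Γ : Type*} [Group Γ] (φ : Γ → ℂ) (hφ : IsPosType φ) (γ : Γ) (c₁ c₂ : ℂ) :
    0 ≤ (c₁ * (starRingEnd ℂ) c₁ + c₂ * (starRingEnd ℂ) c₂) * φ 1
      + c₂ * (starRingEnd ℂ) c₁ * φ γ + c₁ * (starRingEnd ℂ) c₂ * φ γ⁻¹ := by
  have h := hφ 2 ![1, γ] ![c₁, c₂]
  simp only [Fin.sum_univ_two, Matrix.cons_val_zero, Matrix.cons_val_one, Matrix.head_cons,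
    inv_one, one_mul, mul_one, inv_mul_cancel] at h
  convert h using 1
  ring

lemma symm_conj {Γ : Type*} [Group Γ] (φ : Γ → ℂ) (hφ : IsPosType φ) (h1 : φ 1 = 1) (γ : Γ) :
    φ γ⁻¹ = (starRingEnd ℂ) (φ γ) := by
  have h2 := two_point φ hφ γ 1 1
  have h3 := two_point φ hφ γ 1 Complex.I
  rw [h1, cnonneg] at h2 h3
  simp [Complex.add_im, Complex.mul_im, Complex.mul_re] at h2 h3
  apply Complex.ext
  · simp only [Complex.conj_re]; linarith [h3.2]
  · simp only [Complex.conj_im]; linarith [h2.2]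

lemma psi_posType {Γ : Type*} [Group Γ] (φ : Γ → ℂ) (hφ : IsPosType φ) (z : Γ)
    (hz : ∀ γ : Γ, z * γ = γ * z) (d : ℂ) :
    IsPosType (fun γ => (1 + d * (starRingEnd ℂ) d) * φ γ + d * φ (z * γ)
      + (starRingEnd ℂ) d * φ (z⁻¹ * γ)) := by
  intro n γ c
  set f : Fin n ⊕ Fin n → Γ := Sum.elim γ (fun i => z * γ i) with hf
  set g : Fin n ⊕ Fin n → ℂ := Sum.elim c (fun i => d * c i) with hg
  have h := hφ (n + n) (f ∘ finSumFinEquiv.symm) (g ∘ finSumFinEquiv.symm)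
  have hzi : ∀ γ : Γ, z⁻¹ * γ = γ * z⁻¹ := fun γ => by
    rw [inv_mul_eq_iff_eq_mul, ← mul_assoc, hz, mul_assoc, mul_inv_cancel, mul_one]
  have e1 : ∀ i j : Fin n, (z * γ j)⁻¹ * γ i = z⁻¹ * ((γ j)⁻¹ * γ i) := fun i j => by
    rw [mul_inv_rev, mul_assoc, hzi (γ i), ← mul_assoc, ← hzi]
  have e2 : ∀ i j : Fin n, (γ j)⁻¹ * (z * γ i) = z * ((γ j)⁻¹ * γ i) := fun i j => by
    rw [← mul_assoc, ← hz ((γ j)⁻¹), mul_assoc]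
  have e3 : ∀ i j : Fin n, (z * γ j)⁻¹ * (z * γ i) = (γ j)⁻¹ * γ i := fun i j => by
    rw [mul_inv_rev, mul_assoc, ← mul_assoc z⁻¹, inv_mul_cancel, one_mul]
  have key : ∑ i : Fin n ⊕ Fin n, ∑ j : Fin n ⊕ Fin n,
      g i * (starRingEnd ℂ) (g j) * φ ((f j)⁻¹ * f i)
      = ∑ i, ∑ j, c i * (starRingEnd ℂ) (c j) *
          ((1 + d * (starRingEnd ℂ) d) * φ ((γ j)⁻¹ * γ i) + d * φ (z * ((γ j)⁻¹ * γ i))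
            + (starRingEnd ℂ) d * φ (z⁻¹ * ((γ j)⁻¹ * γ i))) := by
    simp only [Fintype.sum_sum_type, hf, hg, Sum.elim_inl, Sum.elim_inr, e1, e2, e3, map_mul,
      ← Finset.sum_add_distrib]
    exact Finset.sum_congr rfl fun i _ => Finset.sum_congr rfl fun j _ => by ring
  rw [show (∑ i, ∑ j, (g ∘ finSumFinEquiv.symm) i * (starRingEnd ℂ) ((g ∘ finSumFinEquiv.symm) j)
        * φ (((f ∘ finSumFinEquiv.symm) j)⁻¹ * (f ∘ finSumFinEquiv.symm) i))
      = ∑ i : Fin n ⊕ Fin n, ∑ j : Fin n ⊕ Fin n,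
          g i * (starRingEnd ℂ) (g j) * φ ((f j)⁻¹ * f i) from ?_] at h
  · rw [key] at h
    exact h
  · rw [← Equiv.sum_comp finSumFinEquiv.symm
      (fun i => ∑ j : Fin n ⊕ Fin n, g i * (starRingEnd ℂ) (g j) * φ ((f j)⁻¹ * f i))]
    exact Finset.sum_congr rfl fun i _ => by
      rw [← Equiv.sum_comp finSumFinEquiv.symm
        (fun j => g _ * (starRingEnd ℂ) (g j) * φ ((f j)⁻¹ * f _))]
      rfl

lemma smul_posType {Γ : Type*} [Group Γ] (φ : Γ → ℂ) (hφ : IsPosType φ) (r : ℝ) (hr : 0 ≤ r) :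
    IsPosType (fun γ => (r : ℂ) * φ γ) := by
  intro n γ c
  have h := hφ n γ c
  calc (0:ℂ) ≤ (r:ℂ) * ∑ i, ∑ j, c i * (starRingEnd ℂ) (c j) * φ ((γ j)⁻¹ * γ i) :=
        mul_nonneg (by exact_mod_cast hr) h
    _ = _ := by
        simp only [Finset.mul_sum]
        exact Finset.sum_congr rfl fun i _ => Finset.sum_congr rfl fun j _ => by ring

lemma key {G Γ : Type*} [Group G] [Group Γ] [MulDistribMulAction G Γ]
    (φ : Γ → ℂ) (hφ : IsInvChar G φ)
    (z : Γ) (hz : ∀ γ : Γ, z * γ = γ * z) (hzG : ∀ g : G, g • z = z)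
    (d : ℂ) (hd : 2 * ‖d‖ * ‖φ z‖ < 1) :
    ∀ γ : Γ, d * φ (z * γ) + (starRingEnd ℂ) d * φ (z⁻¹ * γ)
      = (d * φ z + (starRingEnd ℂ) d * (starRingEnd ℂ) (φ z)) * φ γ := by
  obtain ⟨⟨hpt, hinv, h1⟩, hext⟩ := hφ
  have hsym := symm_conj φ hpt h1
  set Ψ : ℂ → Γ → ℂ := fun e γ => (1 + e * (starRingEnd ℂ) e) * φ γ + e * φ (z * γ)
    + (starRingEnd ℂ) e * φ (z⁻¹ * γ) with hΨ
  set u : ℂ → ℝ := fun e => 1 + Complex.normSq e + 2 * (e * φ z).re with hu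
  have hΨ1 : ∀ e : ℂ, Ψ e 1 = (u e : ℂ) := by
    intro e
    have hw := Complex.add_conj (e * φ z)
    rw [map_mul] at hw
    push_cast at hw
    have hm := Complex.mul_conj e
    simp only [hΨ, hu, mul_one, h1, hsym z]
    push_cast
    linear_combination hw + hm
  have hupos : ∀ e : ℂ, ‖e‖ = ‖d‖ → 0 < u e := by
    intro e he
    have h2 : |(e * φ z).re| ≤ ‖d‖ * ‖φ z‖ := by
      calc |(e * φ z).re| ≤ ‖e * φ z‖ := Complex.abs_re_le_norm _
        _ = ‖d‖ * ‖φ z‖ := by rw [norm_mul, he]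
    have h3 := Complex.normSq_nonneg e
    have h4 := abs_le.1 h2
    simp only [hu]
    nlinarith
  have hud := hupos d rfl
  have hvd := hupos (-d) (by simp)
  set S : ℝ := u d + u (-d) with hS
  have hSval : S = 2 * (1 + Complex.normSq d) := by
    simp only [hS, hu, Complex.normSq_neg, neg_mul, Complex.neg_re]
    ring
  have hSpos : 0 < S := by positivity
  have hSC : (S : ℂ) = 2 * (1 + d * (starRingEnd ℂ) d) := by
    rw [hSval, Complex.mul_conj]
    push_cast
    ring
  set t : ℝ := u d / S with ht
  have htrace : ∀ e : ℂ, ‖e‖ = ‖d‖ →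
      IsInvTrace G (fun γ => (((u e : ℝ))⁻¹ : ℂ) * Ψ e γ) := by
    intro e he
    have hue := hupos e he
    refine ⟨?_, ?_, ?_⟩
    · have := smul_posType (Ψ e) (psi_posType φ hpt z hz e) ((u e)⁻¹) (le_of_lt (by positivity))
      simpa using this
    · intro g γ
      have hz1 : z * g • γ = g • (z * γ) := by rw [smul_mul', hzG]
      have hz2 : z⁻¹ * g • γ = g • (z⁻¹ * γ) := by rw [smul_mul', smul_inv', hzG]
      simp only [hΨ, hz1, hz2, hinv]
    · show (((u e : ℝ)) : ℂ)⁻¹ * Ψ e 1 = 1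
      rw [hΨ1 e, inv_mul_cancel₀ (by exact_mod_cast hue.ne')]
  have hdecomp : φ = (fun γ => (t : ℂ) * ((((u d : ℝ))⁻¹ : ℂ) * Ψ d γ)
      + ((1 - t : ℝ) : ℂ) * ((((u (-d) : ℝ))⁻¹ : ℂ) * Ψ (-d) γ)) := by
    funext γ
    have hsum : Ψ d γ + Ψ (-d) γ = 2 * (1 + d * (starRingEnd ℂ) d) * φ γ := by
      simp only [hΨ, map_neg]
      ring
    have h1t : (1 - t : ℝ) = u (-d) / S := by
      rw [ht]
      field_simp
      rw [hS]
      ring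
    rw [ht, h1t]
    push_cast
    have hudC : ((u d : ℝ) : ℂ) ≠ 0 := by exact_mod_cast hud.ne'
    have hvdC : ((u (-d) : ℝ) : ℂ) ≠ 0 := by exact_mod_cast hvd.ne'
    have hSC0 : ((S : ℝ) : ℂ) ≠ 0 := by exact_mod_cast hSpos.ne'
    field_simp
    linear_combination (-1 : ℂ) * hsum + φ γ * hSC
  have ht0 : 0 < t := div_pos hud hSpos
  have ht1 : t < 1 := (div_lt_one hSpos).2 (by rw [hS]; linarith)
  obtain ⟨heq, -⟩ := hext _ _ t (htrace d rfl) (htrace (-d) (by simp)) ht0 ht1 hdecomp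
  intro γ
  have h5 : (((u d : ℝ))⁻¹ : ℂ) * Ψ d γ = φ γ := congrFun heq γ
  have h6 : Ψ d γ = ((u d : ℝ) : ℂ) * φ γ := by
    rw [← h5]
    rw [← mul_assoc, mul_inv_cancel₀ (by exact_mod_cast hud.ne'), one_mul]
  have h7 : ((u d : ℝ) : ℂ) = 1 + d * (starRingEnd ℂ) d + (d * φ z + (starRingEnd ℂ) (d * φ z)) := by
    rw [hu]
    push_cast
    rw [Complex.add_conj, ← Complex.mul_conj d]
    push_cast
    ring
  simp only [hΨ] at h6
  rw [h7, map_mul] at h6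
  linear_combination h6

end Stmt6Aux

theorem stmt6 {G Γ : Type*} [Group G] [Group Γ] [MulDistribMulAction G Γ]
    (φ : Γ → ℂ) (hφ : IsInvChar G φ)
    (z : Γ) (hz : ∀ γ : Γ, z * γ = γ * z) (hzG : ∀ g : G, g • z = z) :
    ‖φ z‖ = 1 := by
  have hpt := hφ.1.1
  have h1 := hφ.1.2.2
  have hsym := Stmt6Aux.symm_conj φ hpt h1
  set a : ℂ := φ z with ha
  set s : ℝ := (2 * (‖a‖ + 1))⁻¹ with hs
  have hs0 : 0 < s := by positivity
  have habs : ∀ d : ℂ, ‖d‖ = s → 2 * ‖d‖ * ‖a‖ < 1 := by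
    intro d hd
    rw [hd, hs]
    rw [show (2:ℝ) * (2 * (‖a‖ + 1))⁻¹ * ‖a‖
        = (2 * ‖a‖) / (2 * (‖a‖ + 1)) by ring,
      div_lt_one (by positivity)]
    linarith
  have E1 := Stmt6Aux.key φ hφ z hz hzG (s : ℂ)
    (habs _ (by rw [Complex.norm_real, Real.norm_eq_abs, abs_of_pos hs0])) z⁻¹
  have E2 := Stmt6Aux.key φ hφ z hz hzG ((s : ℂ) * Complex.I)
    (habs _ (by rw [norm_mul, Complex.norm_real, Real.norm_eq_abs, Complex.norm_I, abs_of_pos hs0, mul_one])) z⁻¹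
  rw [mul_inv_cancel, h1, hsym z] at E1 E2
  rw [Complex.conj_ofReal] at E1
  rw [map_mul, Complex.conj_ofReal, Complex.conj_I] at E2
  have hsne : (s : ℂ) ≠ 0 := by exact_mod_cast hs0.ne'
  have hIne : Complex.I ≠ 0 := Complex.I_ne_zero
  have hkey : a * (starRingEnd ℂ) a = 1 := by
    have h2 : (2 * (s:ℂ) * Complex.I) * (a * (starRingEnd ℂ) a) = (2 * s * Complex.I) * 1 := by
      linear_combination (-Complex.I) * E1 - E2
    have := mul_left_cancel₀ (by simp [hsne, hIne] : (2 * (s:ℂ) * Complex.I) ≠ 0) h2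
    simpa using this
  rw [Complex.mul_conj] at hkey
  have hn : Complex.normSq a = 1 := by exact_mod_cast hkey
  rw [Complex.norm_def, hn, Real.sqrt_one]
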